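/- For all real numbers d, δ and τ, with the quantile check function ρ_τ(u) = u(τ − 𝟙(u < 0)), the following identity holds: ρ_τ(d − δ) − ρ_τ(d) − δ(𝟙(d ≤ 0) − τ) = ∫_0^δ [ 𝟙(d ≤ t) − 𝟙(d ≤ 0) ] dt. -/

import Mathlib

open MeasureTheory

lemma indicator_intervalIntegrable (d a b : ℝ) :
    IntervalIntegrable (fun t => if d ≤ t then (1:ℝ) else 0) volume a b := by
  have h : (fun t => if d ≤ t then (1:ℝ) else 0)
      = Set.indicator (Set.Ici d) (fun _ => (1:ℝ)) := by
    ext t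
    by_cases h : d ≤ t <;> simp [Set.indicator, Set.mem_Ici, h]
  rw [h, intervalIntegrable_iff]
  exact (integrableOn_const measure_Ioc_lt_top.ne).indicator measurableSet_Ici

lemma indicator_integral (d δ : ℝ) :
    ∫ t in (0:ℝ)..δ, (if d ≤ t then (1:ℝ) else 0)
      = if d ≤ 0 then max d δ else max (δ - d) 0 := by
  have hae : ∀ᵐ t : ℝ, t ≠ d := by
    have : (volume : Measure ℝ) {d} = 0 := measure_singleton d
    filter_upwards [measure_eq_zero_iff_ae_notMem.mp this] with t ht
    simpa using ht
  by_cases hd0 : d ≤ 0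
  · rw [if_pos hd0]
    by_cases hdδ : d ≤ δ
    · rw [max_eq_right hdδ]
      have h : ∫ t in (0:ℝ)..δ, (if d ≤ t then (1:ℝ) else 0)
          = ∫ _ in (0:ℝ)..δ, (1:ℝ) := by
        apply intervalIntegral.integral_congr
        intro t ht
        rw [Set.mem_uIcc] at ht
        have : d ≤ t := by rcases ht with ⟨h1, _⟩ | ⟨h1, _⟩ <;> linarith
        simp [this]
      rw [h, intervalIntegral.integral_const]
      simp
    · -- δ < d ≤ 0
      push_neg at hdδ
      rw [max_eq_left hdδ.le]
      have hsplit := intervalIntegral.integral_add_adjacent_intervals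
        (indicator_intervalIntegrable d 0 d) (indicator_intervalIntegrable d d δ)
      rw [← hsplit]
      have h1 : ∫ t in (0:ℝ)..d, (if d ≤ t then (1:ℝ) else 0)
          = ∫ _ in (0:ℝ)..d, (1:ℝ) := by
        apply intervalIntegral.integral_congr
        intro t ht
        rw [Set.mem_uIcc] at ht
        have : d ≤ t := by rcases ht with ⟨h1, _⟩ | ⟨h1, _⟩ <;> linarith
        simp [this]
      have h2 : ∫ t in d..δ, (if d ≤ t then (1:ℝ) else 0)
          = ∫ _ in d..δ, (0:ℝ) := by
        apply intervalIntegral.integral_congr_ae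
        filter_upwards [hae] with t htd ht
        rw [Set.mem_uIoc] at ht
        have : ¬ d ≤ t := by
          rcases ht with ⟨ha, hb⟩ | ⟨ha, hb⟩
          · linarith
          · exact not_le.mpr (lt_of_le_of_ne hb htd)
        simp [this]
      rw [h1, h2, intervalIntegral.integral_const, intervalIntegral.integral_const]
      simp
  · push_neg at hd0
    rw [if_neg (not_le.mpr hd0)]
    by_cases hdδ : δ ≤ d
    · rw [max_eq_right (by linarith : δ - d ≤ 0)]
      have h : ∫ t in (0:ℝ)..δ, (if d ≤ t then (1:ℝ) else 0)
          = ∫ _ in (0:ℝ)..δ, (0:ℝ) := by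
        apply intervalIntegral.integral_congr_ae
        filter_upwards [hae] with t htd ht
        rw [Set.mem_uIoc] at ht
        have : ¬ d ≤ t := by
          rcases ht with ⟨ha, hb⟩ | ⟨ha, hb⟩
          · exact not_le.mpr (lt_of_le_of_ne (hb.trans hdδ) htd)
          · linarith
        simp [this]
      rw [h, intervalIntegral.integral_const]
      simp
    · -- 0 < d < δ
      push_neg at hdδ
      rw [max_eq_left (by linarith : (0:ℝ) ≤ δ - d)]
      have hsplit := intervalIntegral.integral_add_adjacent_intervals
        (indicator_intervalIntegrable d 0 d) (indicator_intervalIntegrable d d δ)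
      rw [← hsplit]
      have h1 : ∫ t in (0:ℝ)..d, (if d ≤ t then (1:ℝ) else 0)
          = ∫ _ in (0:ℝ)..d, (0:ℝ) := by
        apply intervalIntegral.integral_congr_ae
        filter_upwards [hae] with t htd ht
        rw [Set.mem_uIoc] at ht
        have : ¬ d ≤ t := by
          rcases ht with ⟨ha, hb⟩ | ⟨ha, hb⟩
          · exact not_le.mpr (lt_of_le_of_ne hb htd)
          · linarith
        simp [this]
      have h2 : ∫ t in d..δ, (if d ≤ t then (1:ℝ) else 0)
          = ∫ _ in d..δ, (1:ℝ) := by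
        apply intervalIntegral.integral_congr
        intro t ht
        rw [Set.mem_uIcc] at ht
        have : d ≤ t := by rcases ht with ⟨ha, _⟩ | ⟨ha, _⟩ <;> linarith
        simp [this]
      rw [h1, h2, intervalIntegral.integral_const, intervalIntegral.integral_const]
      simp

/-- Knight-type identity for the quantile check function
`ρ_τ(u) = u(τ − 𝟙(u < 0))`: for all reals `d`, `δ`, `τ`,
`ρ_τ(d − δ) − ρ_τ(d) − δ(𝟙(d ≤ 0) − τ) = ∫_0^δ [𝟙(d ≤ t) − 𝟙(d ≤ 0)] dt`. -/
theorem check_function_expansion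
    (τ d δ : ℝ) (ρ : ℝ → ℝ → ℝ)
    (hρ : ∀ t u, ρ t u = u * (t - (if u < 0 then (1:ℝ) else 0))) :
    ρ τ (d - δ) - ρ τ d - δ * ((if d ≤ 0 then (1:ℝ) else 0) - τ)
      = ∫ t in (0:ℝ)..δ,
          ((if d ≤ t then (1:ℝ) else 0) - (if d ≤ 0 then (1:ℝ) else 0)) := by
  have hsub : ∫ t in (0:ℝ)..δ,
        ((if d ≤ t then (1:ℝ) else 0) - (if d ≤ 0 then (1:ℝ) else 0))
      = (∫ t in (0:ℝ)..δ, (if d ≤ t then (1:ℝ) else 0))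
        - ∫ _ in (0:ℝ)..δ, (if d ≤ 0 then (1:ℝ) else 0) :=
    intervalIntegral.integral_sub (indicator_intervalIntegrable d 0 δ)
      (intervalIntegrable_const)
  rw [hsub, indicator_integral, intervalIntegral.integral_const, hρ, hρ]
  simp only [smul_eq_mul]
  rcases le_or_gt d 0 with h0 | h0
  · rw [if_pos h0, if_pos h0]
    rcases le_total d δ with h1 | h1
    · rw [max_eq_right h1]
      rcases eq_or_lt_of_le h1 with h2 | h2
      · subst h2
        simp only [sub_self]
        by_cases h3 : d < 0 <;> simp [h3] <;> linarith
      · rw [if_pos (by linarith : d - δ < 0)]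
        by_cases h3 : d < 0 <;> simp [h3] <;> linarith
    · rw [max_eq_left h1]
      rw [if_neg (by linarith : ¬ d - δ < 0)]
      by_cases h3 : d < 0 <;> simp [h3] <;> linarith
  · have h0' : ¬ d ≤ 0 := not_le.mpr h0
    have h3 : ¬ d < 0 := not_lt.mpr h0.le
    rw [if_neg h0', if_neg h0', if_neg h3]
    rcases le_total δ d with h1 | h1
    · rw [max_eq_right (by linarith : δ - d ≤ 0)]
      rw [if_neg (by linarith : ¬ d - δ < 0)]
      ring
    · rw [max_eq_left (by linarith : (0:ℝ) ≤ δ - d)]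
      rcases eq_or_lt_of_le h1 with h2 | h2
      · subst h2
        simp only [sub_self]
        norm_num
      · rw [if_pos (by linarith : d - δ < 0)]
        ring
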